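/- Let q be a block whose primitive root has a non-empty diagonal border. Then there exists a q-coverable infinite picture 𝐰 : ℤ² → Σ that is not periodic (does not have two non-colinear vectors of periodicity). -/

import Mathlib

/-- The block `q` of size `n × m` occurs in the picture `W : ℤ² → α` at `(a, b)`. -/
def OccAt {α : Type*} (W : ℤ → ℤ → α) (n m : ℕ) (q : ℕ → ℕ → α) (a b : ℤ) : Prop :=
  ∀ i < n, ∀ j < m, W (a + (i : ℤ)) (b + (j : ℤ)) = q i j

/-- The block `q` of size `n × m` is a cover of the picture `W`:
every position of `ℤ²` lies inside an occurrence of `q`. -/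
def Covers2 {α : Type*} (W : ℤ → ℤ → α) (n m : ℕ) (q : ℕ → ℕ → α) : Prop :=
  ∀ x y : ℤ, ∃ a b : ℤ, a ≤ x ∧ x < a + (n : ℤ) ∧ b ≤ y ∧ y < b + (m : ℤ) ∧
    OccAt W n m q a b

/-- `W` is multi-scale coverable: covers of arbitrarily large width and height. -/
def MSC {α : Type*} (W : ℤ → ℤ → α) : Prop :=
  ∀ n : ℕ, ∃ (nq mq : ℕ) (q : ℕ → ℕ → α), n ≤ nq ∧ n ≤ mq ∧ Covers2 W nq mq q

/-- `r` (of size `w' × h'`) is a root of the block `q` (of size `w × h`):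
`q` is tiled by copies of `r`. -/
def IsRoot {α : Type*} (w' h' : ℕ) (r : ℕ → ℕ → α) (w h : ℕ) (q : ℕ → ℕ → α) : Prop :=
  0 < w' ∧ 0 < h' ∧ (∃ n : ℕ, 0 < n ∧ w = n * w') ∧ (∃ m : ℕ, 0 < m ∧ h = m * h') ∧
    ∀ x < w, ∀ y < h, q x y = r (x % w') (y % h')

/-- The block `r` of size `w' × h'` is primitive: its only root is itself. -/
def PrimitiveBlock {α : Type*} (w' h' : ℕ) (r : ℕ → ℕ → α) : Prop :=
  ∀ (w'' h'' : ℕ) (s : ℕ → ℕ → α), IsRoot w'' h'' s w' h' r → w'' = w' ∧ h'' = h'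

/-- The block `r` of size `rw × rh` has a non-empty diagonal border: a block
of strictly smaller width and height occurring in two opposite corners. -/
def HasDiagBorder {α : Type*} (rw rh : ℕ) (r : ℕ → ℕ → α) : Prop :=
  ∃ bw bh : ℕ, 0 < bw ∧ 0 < bh ∧ bw < rw ∧ bh < rh ∧
    ((∀ i < bw, ∀ j < bh, r i j = r (rw - bw + i) (rh - bh + j)) ∨
     (∀ i < bw, ∀ j < bh, r i (rh - bh + j) = r (rw - bw + i) j))

/-- `W` is periodic: it has two non-colinear vectors of periodicity. -/
def Periodic2 {α : Type*} (W : ℤ → ℤ → α) : Prop :=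
  ∃ p1 p2 : ℤ × ℤ, p1 ≠ (0, 0) ∧ p2 ≠ (0, 0) ∧ p1.1 * p2.2 - p1.2 * p2.1 ≠ 0 ∧
    (∀ x y : ℤ, W (x + p1.1) (y + p1.2) = W x y) ∧
    (∀ x y : ℤ, W (x + p2.1) (y + p2.2) = W x y)

namespace Stmt17Aux

variable {α : Type*}

/-- The doubly `(rw, rh)`-periodic picture generated by `r`. -/
def P (rw rh : ℕ) (r : ℕ → ℕ → α) (x y : ℤ) : α :=
  r (x % (rw : ℤ)).toNat (y % (rh : ℤ)).toNat

lemma P_congr (rw rh : ℕ) (r : ℕ → ℕ → α) {x x' y y' : ℤ}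
    (hx : x % (rw : ℤ) = x' % (rw : ℤ)) (hy : y % (rh : ℤ) = y' % (rh : ℤ)) :
    P rw rh r x y = P rw rh r x' y' := by
  unfold P; rw [hx, hy]

lemma P_nat (rw rh : ℕ) (r : ℕ → ℕ → α) (i j : ℕ) :
    P rw rh r (i : ℤ) (j : ℤ) = r (i % rw) (j % rh) := by
  unfold P
  have h1 : ((i : ℤ) % (rw : ℤ)) = ((i % rw : ℕ) : ℤ) := by push_cast; ring
  have h2 : ((j : ℤ) % (rh : ℤ)) = ((j % rh : ℕ) : ℤ) := by push_cast; ring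
  rw [h1, h2, Int.toNat_natCast, Int.toNat_natCast]

/-- The deformed picture: strip `y ∈ [0,h)` shifted horizontally by 1. -/
def Wp (rw rh h : ℕ) (r : ℕ → ℕ → α) (x y : ℤ) : α :=
  P rw rh r (x - (if 0 ≤ y ∧ y < (h : ℤ) then 1 else 0)) y

lemma Wp_out (rw rh h : ℕ) (r : ℕ → ℕ → α) (x y : ℤ) (hy : ¬ (0 ≤ y ∧ y < (h : ℤ))) :
    Wp rw rh h r x y = P rw rh r x y := by
  unfold Wp; rw [if_neg hy, sub_zero]

lemma Wp_in (rw rh h : ℕ) (r : ℕ → ℕ → α) (x y : ℤ) (hy : 0 ≤ y ∧ y < (h : ℤ)) :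
    Wp rw rh h r x y = P rw rh r (x - 1) y := by
  unfold Wp; rw [if_pos hy]

lemma covers (w h rw rh : ℕ) (q r : ℕ → ℕ → α) (hroot : IsRoot rw rh r w h q) :
    Covers2 (Wp rw rh h r) w h q := by
  obtain ⟨hrw, hrh, ⟨n, hn, hwn⟩, ⟨m, hm, hhm⟩, hq⟩ := hroot
  have hrwz : (rw : ℤ) ≠ 0 := by exact_mod_cast hrw.ne'
  have hh0 : 0 < h := hhm ▸ Nat.mul_pos hm hrh
  have hhz : (h : ℤ) ≠ 0 := by exact_mod_cast hh0.ne'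
  have hrwle : (rw : ℤ) ≤ (w : ℤ) := by
    have : rw ≤ w := hwn ▸ Nat.le_mul_of_pos_left rw hn
    exact_mod_cast this
  intro x y
  set b : ℤ := (h : ℤ) * (y / (h : ℤ)) with hbdef
  have hby : b + y % (h : ℤ) = y := Int.mul_ediv_add_emod y h
  have hyr0 : 0 ≤ y % (h : ℤ) := Int.emod_nonneg y hhz
  have hyrlt : y % (h : ℤ) < h := Int.emod_lt_of_pos y (by exact_mod_cast hh0)
  set d : ℤ := if b = 0 then 1 else 0 with hddef
  set a : ℤ := x - (x - d) % (rw : ℤ) with hadef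
  have har0 : 0 ≤ (x - d) % (rw : ℤ) := Int.emod_nonneg _ hrwz
  have harlt : (x - d) % (rw : ℤ) < rw := Int.emod_lt_of_pos _ (by exact_mod_cast hrw)
  refine ⟨a, b, by omega, by omega, by omega, by omega, ?_⟩
  intro i hi j hj
  -- the strip indicator is constant on the strip of `b`
  have hstrip : ∀ jj : ℤ, 0 ≤ jj → jj < (h : ℤ) →
      ((if 0 ≤ b + jj ∧ b + jj < (h : ℤ) then (1 : ℤ) else 0) = d) := by
    intro jj h0 h1
    rcases eq_or_ne b 0 with hb0 | hb0
    · rw [hddef, if_pos hb0, if_pos]; constructor <;> omega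
    · have : (h : ℤ) ≤ |b| := by
        have hd : (h : ℤ) ∣ b := ⟨y / (h : ℤ), hbdef⟩
        exact Int.le_of_dvd (abs_pos.mpr hb0) ((dvd_abs _ _).mpr hd)
      rw [hddef, if_neg hb0, if_neg]
      rcases abs_cases b with ⟨he, _⟩ | ⟨he, _⟩ <;> omega
  have hj' : (0:ℤ) ≤ (j:ℤ) ∧ (j:ℤ) < (h:ℤ) := ⟨Int.natCast_nonneg j, by exact_mod_cast hj⟩
  have key : Wp rw rh h r (a + (i : ℤ)) (b + (j : ℤ))
      = P rw rh r ((i : ℤ)) ((j : ℤ)) := by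
    unfold Wp
    rw [hstrip (j : ℤ) hj'.1 hj'.2]
    apply P_congr
    · have : a + (i : ℤ) - d = (i : ℤ) + (rw : ℤ) * ((x - d) / (rw : ℤ)) := by
        have := Int.mul_ediv_add_emod (x - d) (rw : ℤ)
        omega
      rw [this, Int.add_mul_emod_self_left]
    · have hdvd : (rh : ℤ) ∣ b := by
        have h1 : rh ∣ h := ⟨m, by rw [hhm, Nat.mul_comm]⟩
        exact dvd_mul_of_dvd_left (by exact_mod_cast h1) _
      obtain ⟨c, hc⟩ := hdvd
      have : b + (j : ℤ) = (j : ℤ) + c * (rh : ℤ) := by rw [hc]; ring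
      rw [this, Int.add_mul_emod_self_right]
  rw [key, P_nat, hq i hi j hj]

lemma no_vper (w h rw rh : ℕ) (q r : ℕ → ℕ → α)
    (hroot : IsRoot rw rh r w h q) (hprim : PrimitiveBlock rw rh r) (hrw2 : 2 ≤ rw)
    (a b : ℤ) (hb : 0 < b)
    (hper : ∀ x y : ℤ, Wp rw rh h r (x + a) (y + b) = Wp rw rh h r x y) : False := by
  obtain ⟨hrw, hrh, ⟨n, hn, hwn⟩, ⟨m, hm, hhm⟩, hq⟩ := hroot
  have hh0 : 0 < h := hhm ▸ Nat.mul_pos hm hrh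
  have hrhle : (rh : ℤ) ≤ (h : ℤ) := by
    have : rh ≤ h := hhm ▸ Nat.le_mul_of_pos_left rh hm
    exact_mod_cast this
  have hrhdvd : (rh : ℤ) ∣ (h : ℤ) := by
    have h1 : rh ∣ h := ⟨m, by rw [hhm, Nat.mul_comm]⟩
    exact_mod_cast h1
  -- vertical periodicity of P
  have Pvert : ∀ (x y t : ℤ), P rw rh r x (y + t * (rh : ℤ)) = P rw rh r x y := by
    intro x y t
    exact P_congr rw rh r rfl (Int.add_mul_emod_self_right ..)
  -- far region: P is (a,b)-periodic
  have A : ∀ x y : ℤ, P rw rh r (x + a) (y + b) = P rw rh r x y := by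
    have A0 : ∀ x y : ℤ, (h : ℤ) ≤ y → P rw rh r (x + a) (y + b) = P rw rh r x y := by
      intro x y hy
      have h1 : ¬ (0 ≤ y ∧ y < (h : ℤ)) := by omega
      have h2 : ¬ (0 ≤ y + b ∧ y + b < (h : ℤ)) := by omega
      rw [← Wp_out rw rh h r x y h1, ← Wp_out rw rh h r (x + a) (y + b) h2, hper]
    intro x y
    set t : ℤ := (h : ℤ) + y.natAbs with ht
    have hy' : (h : ℤ) ≤ y + t * (rh : ℤ) := by
      have h1 : t * 1 ≤ t * (rh : ℤ) := by
        apply mul_le_mul_of_nonneg_left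
        · exact_mod_cast hrh
        · have := Int.natCast_nonneg y.natAbs; omega
      have h2 : -(y.natAbs : ℤ) ≤ y := by
        rw [Int.natCast_natAbs]; exact neg_abs_le y
      omega
    calc P rw rh r (x + a) (y + b) = P rw rh r (x + a) ((y + t * (rh : ℤ)) + b) := by
          rw [show (y + t * (rh:ℤ)) + b = (y + b) + t * (rh:ℤ) by ring, Pvert]
      _ = P rw rh r x (y + t * (rh : ℤ)) := A0 x _ hy'
      _ = P rw rh r x y := Pvert x y t
  -- rows reachable across the seam are constant
  have B : ∀ y : ℤ, 0 ≤ y → y < (h : ℤ) → (h : ℤ) ≤ y + b →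
      ∀ x : ℤ, P rw rh r x y = P rw rh r (x - 1) y := by
    intro y h0 h1 h2 x
    have e1 : Wp rw rh h r x y = P rw rh r (x - 1) y := Wp_in rw rh h r x y ⟨h0, h1⟩
    have e2 : Wp rw rh h r (x + a) (y + b) = P rw rh r (x + a) (y + b) :=
      Wp_out rw rh h r _ _ (by omega)
    have e4 := hper x y
    rw [e2, A x y, e1] at e4
    exact e4
  have Bconst : ∀ y : ℤ, 0 ≤ y → y < (h : ℤ) → (h : ℤ) ≤ y + b →
      ∀ x x' : ℤ, P rw rh r x y = P rw rh r x' y := by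
    intro y h0 h1 h2
    have base : ∀ x : ℤ, P rw rh r x y = P rw rh r 0 y := by
      intro x
      induction x using Int.induction_on with
      | zero => rfl
      | succ k ih => rw [B y h0 h1 h2 ((k:ℤ)+1)]; simpa using ih
      | pred k ih =>
        have hB := B y h0 h1 h2 (-(k:ℤ))
        rw [← hB]
        exact ih
    intro x x'; rw [base x, base x']
  set RC : ℤ → Prop := fun y => ∀ x x' : ℤ, P rw rh r x y = P rw rh r x' y with hRC
  have RC_congr : ∀ y y' : ℤ, y % (rh : ℤ) = y' % (rh : ℤ) → RC y' → RC y := by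
    intro y y' hyy hc x x'
    calc P rw rh r x y = P rw rh r x y' := P_congr rw rh r rfl hyy
      _ = P rw rh r x' y' := hc x x'
      _ = P rw rh r x' y := P_congr rw rh r rfl hyy.symm
  -- rows whose residue is at least rh - b are constant
  have B' : ∀ y : ℤ, (rh : ℤ) - b ≤ y % (rh : ℤ) → RC y := by
    intro y hyv
    set v : ℤ := y % (rh : ℤ) with hv
    have hv0 : 0 ≤ v := Int.emod_nonneg y (by exact_mod_cast hrh.ne')
    have hvlt : v < (rh : ℤ) := Int.emod_lt_of_pos y (by exact_mod_cast hrh)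
    set y'' : ℤ := (h : ℤ) - (rh : ℤ) + v with hy''
    have hcong : y % (rh : ℤ) = y'' % (rh : ℤ) := by
      obtain ⟨c, hc⟩ := hrhdvd
      have : y'' = v + (c - 1) * (rh : ℤ) := by rw [hy'', hc]; ring
      rw [this, Int.add_mul_emod_self_right, ← hv, Int.emod_emod_of_dvd _ dvd_rfl]
    refine RC_congr y y'' hcong ?_
    exact Bconst y'' (by omega) (by omega) (by omega)
  -- propagate constancy down by steps of b
  have Step : ∀ y : ℤ, RC (y + b) → RC y := by
    intro y hc x x'
    calc P rw rh r x y = P rw rh r (x + a) (y + b) := (A x y).symm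
      _ = P rw rh r (x' + a) (y + b) := hc _ _
      _ = P rw rh r x' y := A x' y
  have C : ∀ t : ℕ, ∀ y : ℤ, (rh : ℤ) - b ≤ y % (rh : ℤ) + t * b → RC y := by
    intro t
    induction t with
    | zero => intro y hy; exact B' y (by simpa using hy)
    | succ t ih =>
      intro y hy
      by_cases hcase : (rh : ℤ) - b ≤ y % (rh : ℤ)
      · exact B' y hcase
      · push_neg at hcase
        have hv0 : 0 ≤ y % (rh : ℤ) := Int.emod_nonneg y (by exact_mod_cast hrh.ne')
        have hbrh : b < (rh : ℤ) := by omega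
        have hmod : (y + b) % (rh : ℤ) = y % (rh : ℤ) + b := by
          rw [Int.add_emod, Int.emod_eq_of_lt hb.le hbrh]
          exact Int.emod_eq_of_lt (by omega) (by omega)
        refine Step y (ih (y + b) ?_)
        rw [hmod]
        push_cast at hy ⊢
        nlinarith [hy]
  have allRC : ∀ y : ℤ, RC y := by
    intro y
    refine C rh y ?_
    have hv0 : 0 ≤ y % (rh : ℤ) := Int.emod_nonneg y (by exact_mod_cast hrh.ne')
    have : (rh : ℤ) * 1 ≤ (rh : ℤ) * b := by
      apply mul_le_mul_of_nonneg_left (by omega) (by positivity)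
    linarith
  -- all rows of r are constant: contradiction with primitivity
  have hrowconst : ∀ x y : ℕ, x < rw → y < rh → r x y = r 0 y := by
    intro x y hx hy
    have e1 : r x y = P rw rh r (x : ℤ) (y : ℤ) := by
      rw [P_nat, Nat.mod_eq_of_lt hx, Nat.mod_eq_of_lt hy]
    have e2 : r 0 y = P rw rh r (0 : ℤ) (y : ℤ) := by
      have : ((0:ℕ) : ℤ) = (0 : ℤ) := rfl
      rw [← this, P_nat, Nat.mod_eq_of_lt hy]
      rcases Nat.eq_zero_or_pos rw with h' | h'
      · omega
      · rw [Nat.zero_mod]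
    rw [e1, e2]
    exact allRC (y : ℤ) (x : ℤ) 0
  have hroot1 : IsRoot 1 rh (fun _ j => r 0 j) rw rh r := by
    refine ⟨Nat.one_pos, hrh, ⟨rw, hrw, (Nat.mul_one rw).symm⟩, ⟨1, Nat.one_pos,
      (Nat.one_mul rh).symm⟩, ?_⟩
    intro x hx y hy
    simpa [Nat.mod_eq_of_lt hy] using hrowconst x y hx hy
  have := (hprim 1 rh _ hroot1).1
  omega

lemma no_vper' (w h rw rh : ℕ) (q r : ℕ → ℕ → α)
    (hroot : IsRoot rw rh r w h q) (hprim : PrimitiveBlock rw rh r) (hrw2 : 2 ≤ rw)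
    (a b : ℤ) (hb : b ≠ 0)
    (hper : ∀ x y : ℤ, Wp rw rh h r (x + a) (y + b) = Wp rw rh h r x y) : False := by
  rcases lt_or_gt_of_ne hb with hb' | hb'
  · refine no_vper w h rw rh q r hroot hprim hrw2 (-a) (-b) (by omega) ?_
    intro x y
    have := hper (x + -a) (y + -b)
    simpa using this.symm
  · exact no_vper w h rw rh q r hroot hprim hrw2 a b hb' hper

end Stmt17Aux

theorem stmt17 {α : Type*} (w h rw rh : ℕ) (q r : ℕ → ℕ → α)
    (hroot : IsRoot rw rh r w h q) (hprim : PrimitiveBlock rw rh r)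
    (hdiag : HasDiagBorder rw rh r) :
    ∃ W : ℤ → ℤ → α, Covers2 W w h q ∧ ¬ Periodic2 W := by
  obtain ⟨bw, bh, hbw, hbh, hbwlt, hbhlt, -⟩ := hdiag
  have hrw2 : 2 ≤ rw := by omega
  refine ⟨Stmt17Aux.Wp rw rh h r, Stmt17Aux.covers w h rw rh q r hroot, ?_⟩
  rintro ⟨p1, p2, hne1, hne2, hdet, hp1, hp2⟩
  by_cases h1 : p1.2 = 0
  · by_cases h2 : p2.2 = 0
    · apply hdet; rw [h1, h2]; ring
    · exact Stmt17Aux.no_vper' w h rw rh q r hroot hprim hrw2 p2.1 p2.2 h2 hp2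
  · exact Stmt17Aux.no_vper' w h rw rh q r hroot hprim hrw2 p1.1 p1.2 h1 hp1
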